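/- Let K and H be finite abelian groups of odd order, each equipped with a symplectic structure (write e^{⟨·,·⟩} for the associated pairing on each group), and let ρ : K → Aut(H) be an action of K on H preserving the symplectic pairing of H, i.e. e^{⟨ρ(k)x, ρ(k)y⟩} = e^{⟨x,y⟩} for all k ∈ K and x, y ∈ H. Fix x, y ∈ H. Then the following identity holds in ℂ[K] ⊗ ℂ[K]: Σ_{z,z',t,t' ∈ K} e^{⟨z,t⟩} e^{⟨z',t'⟩} e^{⟨ρ(z⁻¹)x, ρ(t⁻¹)y^{1/2}⟩} zz' ⊗ tt' = |K| · Σ_{u,v ∈ K} e^{⟨u, v^{1/2}⟩} e^{⟨ρ(u^{-1/2})x, ρ(v^{-1/2})y^{1/2}⟩} u ⊗ v. -/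

import Mathlib

open TensorProduct Finset

lemma char_sum_eq_zero {K : Type*} [CommGroup K] [Fintype K] (χ : K →* ℂˣ)
    (g : K) (hg : χ g ≠ 1) : ∑ b : K, ((χ b : ℂˣ) : ℂ) = 0 := by
  have h : ((χ g : ℂˣ) : ℂ) * ∑ b : K, ((χ b : ℂˣ) : ℂ) = ∑ b : K, ((χ b : ℂˣ) : ℂ) := by
    rw [Finset.mul_sum]
    rw [← Equiv.sum_comp (Equiv.mulLeft g) (fun b => ((χ b : ℂˣ) : ℂ))]
    simp [map_mul]
  have h2 : (((χ g : ℂˣ) : ℂ) - 1) * ∑ b : K, ((χ b : ℂˣ) : ℂ) = 0 := by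
    rw [sub_mul, one_mul, h, sub_self]
  rcases mul_eq_zero.1 h2 with h3 | h3
  · exact absurd (Units.ext (by simpa using sub_eq_zero.1 h3)) hg
  · exact h3

lemma sq_eq_one_imp {K : Type*} [CommGroup K] [Fintype K] (hodd : Odd (Fintype.card K))
    {c : K} (h : c * c = 1) : c = 1 := by
  obtain ⟨m, hm⟩ := hodd
  have hc : c ^ (2 * m + 1) = 1 := by rw [← hm]; exact pow_card_eq_one
  have h2 : c ^ (2 * m + 2) = 1 := by
    rw [show 2 * m + 2 = 2 * (m + 1) by ring, pow_mul, pow_two, h, one_pow]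
  have := pow_succ c (2 * m + 1)
  rw [h2, hc, one_mul] at this
  exact this.symm

lemma bk_sum {K : Type*} [CommGroup K] [Fintype K] (hodd : Odd (Fintype.card K))
    (BK : K ≃* (K →* ℂˣ)) (hBK : ∀ a b : K, BK a b = (BK b a)⁻¹) (c : K) (hc : c ≠ 1) :
    ∑ b : K, ((BK b (c * c) : ℂˣ) : ℂ) = 0 := by
  set χ : K →* ℂˣ :=
    { toFun := fun b => BK b (c * c)
      map_one' := by simp
      map_mul' := fun a b => by
        simp only [map_mul, MonoidHom.mul_apply]
        exact mul_mul_mul_comm _ _ _ _ } with hχ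
  have hne : ∃ g, χ g ≠ 1 := by
    by_contra hall
    push_neg at hall
    have hall' : ∀ b : K, BK b (c * c) = 1 := fun b => hall b
    have hBKcc : BK (c * c) = 1 := by
      ext b
      rw [hBK (c * c) b, hall' b, inv_one, MonoidHom.one_apply]
    have h1 : c * c = 1 := BK.injective (by rw [hBKcc, map_one])
    exact hc (sq_eq_one_imp hodd h1)
  obtain ⟨g, hg⟩ := hne
  exact char_sum_eq_zero χ g hg

lemma pointwise {K H : Type*} [CommGroup K] [CommGroup H]
    (BK : K ≃* (K →* ℂˣ)) (hBK : ∀ a b : K, BK a b = (BK b a)⁻¹)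
    (BH : H ≃* (H →* ℂˣ)) (ρ : K →* MulAut H)
    (hρ : ∀ (k : K) (a b : H), BH ((ρ k) b) ((ρ k) a) = BH b a)
    (X Y : H) (p q b c : K) :
    ((BK (q * b) (p * (c * b)) : ℂˣ) : ℂ) *
      ((BK ((q * b)⁻¹ * (q * q)) ((p * (c * b))⁻¹ * (p * p)) : ℂˣ) : ℂ) *
      ((BH ((ρ (q * b)⁻¹) Y) ((ρ (p * (c * b))⁻¹) X) : ℂˣ) : ℂ)
    = ((BK q (p * p) : ℂˣ) : ℂ) * ((BK b (c * c) : ℂˣ) : ℂ) *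
      ((BH ((ρ (c * q⁻¹)) Y) ((ρ p⁻¹) X) : ℂˣ) : ℂ) := by
  have hcomp : ∀ (k1 k2 : K) (w : H), (ρ k1) ((ρ k2) w) = (ρ (k1 * k2)) w :=
    fun k1 k2 w => by rw [map_mul]; rfl
  have hBHterm : BH ((ρ (q * b)⁻¹) Y) ((ρ (p * (c * b))⁻¹) X)
      = BH ((ρ (c * q⁻¹)) Y) ((ρ p⁻¹) X) := by
    have h := hρ (c * b) ((ρ (p * (c * b))⁻¹) X) ((ρ (q * b)⁻¹) Y)
    rw [hcomp, hcomp, show (c * b) * (q * b)⁻¹ = c * q⁻¹ by group,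
      show (c * b) * (p * (c * b))⁻¹ = p⁻¹ by group] at h
    exact h.symm
  rw [hBHterm]
  congr 1
  have harg1 : (q * b)⁻¹ * (q * q) = b⁻¹ * q := by group
  have harg2 : (p * (c * b))⁻¹ * (p * p) = (c * b)⁻¹ * p := by group
  rw [harg1, harg2]
  have hbb : (BK b) b * (BK b) b = 1 := by
    nth_rewrite 1 [hBK b b]; exact inv_mul_cancel _
  have key : (BK (q * b)) (p * (c * b)) * (BK (b⁻¹ * q)) ((c * b)⁻¹ * p)
      = BK q (p * p) * BK b (c * c) := by
    simp only [map_mul, map_inv, MonoidHom.mul_apply, MonoidHom.inv_apply]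
    conv_rhs => rw [← mul_one ((BK q) p * (BK q) p * ((BK b) c * (BK b) c)), ← hbb]
    rw [← Units.val_inj]
    push_cast [Units.val_mul, Units.val_inv_eq_inv_val]
    field_simp
  rw [← Units.val_mul, ← Units.val_mul, key]

lemma scalar_key {K H : Type*} [CommGroup K] [Fintype K] [CommGroup H]
    (hoddK : Odd (Fintype.card K))
    (BK : K ≃* (K →* ℂˣ)) (hBK : ∀ a b : K, BK a b = (BK b a)⁻¹)
    (BH : H ≃* (H →* ℂˣ))
    (sqK : K → K) (hsqK : ∀ a : K, sqK a * sqK a = a)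
    (ρ : K →* MulAut H)
    (hρ : ∀ (k : K) (a b : H), BH ((ρ k) b) ((ρ k) a) = BH b a)
    (X Y : H) (u v : K) :
    (∑ z : K, ∑ t : K, ((BK t z : ℂˣ) : ℂ) * ((BK (t⁻¹ * v) (z⁻¹ * u) : ℂˣ) : ℂ) *
        ((BH ((ρ t⁻¹) Y) ((ρ z⁻¹) X) : ℂˣ) : ℂ))
      = (Fintype.card K : ℂ) *
        (((BK (sqK v) u : ℂˣ) : ℂ) * ((BH ((ρ (sqK v)⁻¹) Y) ((ρ (sqK u)⁻¹) X) : ℂˣ) : ℂ)) := by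
  set p := sqK u with hp
  set q := sqK v with hq
  have hu : p * p = u := hsqK u
  have hv : q * q = v := hsqK v
  rw [← hu, ← hv]
  -- reindex z = p * a
  rw [← Equiv.sum_comp (Equiv.mulLeft p)
    (fun z : K => ∑ t : K, ((BK t z : ℂˣ) : ℂ) *
      ((BK (t⁻¹ * (q * q)) (z⁻¹ * (p * p)) : ℂˣ) : ℂ) *
      ((BH ((ρ t⁻¹) Y) ((ρ z⁻¹) X) : ℂˣ) : ℂ))]
  simp only [Equiv.coe_mulLeft]
  -- reindex t = q * b
  have h2 : ∀ a : K, (∑ t : K, ((BK t (p * a) : ℂˣ) : ℂ) *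
      ((BK (t⁻¹ * (q * q)) ((p * a)⁻¹ * (p * p)) : ℂˣ) : ℂ) *
      ((BH ((ρ t⁻¹) Y) ((ρ (p * a)⁻¹) X) : ℂˣ) : ℂ))
      = ∑ b : K, ((BK (q * b) (p * a) : ℂˣ) : ℂ) *
      ((BK ((q * b)⁻¹ * (q * q)) ((p * a)⁻¹ * (p * p)) : ℂˣ) : ℂ) *
      ((BH ((ρ (q * b)⁻¹) Y) ((ρ (p * a)⁻¹) X) : ℂˣ) : ℂ) := by
    intro a
    rw [← Equiv.sum_comp (Equiv.mulLeft q)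
      (fun t : K => ((BK t (p * a) : ℂˣ) : ℂ) *
        ((BK (t⁻¹ * (q * q)) ((p * a)⁻¹ * (p * p)) : ℂˣ) : ℂ) *
        ((BH ((ρ t⁻¹) Y) ((ρ (p * a)⁻¹) X) : ℂˣ) : ℂ))]
    simp only [Equiv.coe_mulLeft]
  simp only [h2]
  -- swap a and b
  rw [Finset.sum_comm]
  -- reindex a = c * b
  have h3 : ∀ b : K, (∑ a : K, ((BK (q * b) (p * a) : ℂˣ) : ℂ) *
      ((BK ((q * b)⁻¹ * (q * q)) ((p * a)⁻¹ * (p * p)) : ℂˣ) : ℂ) *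
      ((BH ((ρ (q * b)⁻¹) Y) ((ρ (p * a)⁻¹) X) : ℂˣ) : ℂ))
      = ∑ c : K, ((BK (q * b) (p * (c * b)) : ℂˣ) : ℂ) *
      ((BK ((q * b)⁻¹ * (q * q)) ((p * (c * b))⁻¹ * (p * p)) : ℂˣ) : ℂ) *
      ((BH ((ρ (q * b)⁻¹) Y) ((ρ (p * (c * b))⁻¹) X) : ℂˣ) : ℂ) := by
    intro b
    rw [← Equiv.sum_comp (Equiv.mulRight b)
      (fun a : K => ((BK (q * b) (p * a) : ℂˣ) : ℂ) *
        ((BK ((q * b)⁻¹ * (q * q)) ((p * a)⁻¹ * (p * p)) : ℂˣ) : ℂ) *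
        ((BH ((ρ (q * b)⁻¹) Y) ((ρ (p * a)⁻¹) X) : ℂˣ) : ℂ))]
    simp only [Equiv.coe_mulRight]
  simp only [h3]
  -- pointwise simplification
  have hpt : ∀ b c : K,
      ((BK (q * b) (p * (c * b)) : ℂˣ) : ℂ) *
        ((BK ((q * b)⁻¹ * (q * q)) ((p * (c * b))⁻¹ * (p * p)) : ℂˣ) : ℂ) *
        ((BH ((ρ (q * b)⁻¹) Y) ((ρ (p * (c * b))⁻¹) X) : ℂˣ) : ℂ)
      = ((BK q (p * p) : ℂˣ) : ℂ) * ((BK b (c * c) : ℂˣ) : ℂ) *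
        ((BH ((ρ (c * q⁻¹)) Y) ((ρ p⁻¹) X) : ℂˣ) : ℂ) :=
    fun b c => pointwise BK hBK BH ρ hρ X Y p q b c
  simp only [hpt]
  -- swap b and c, factor and use orthogonality
  rw [Finset.sum_comm]
  have h4 : ∀ c : K, (∑ b : K, ((BK q (p * p) : ℂˣ) : ℂ) * ((BK b (c * c) : ℂˣ) : ℂ) *
      ((BH ((ρ (c * q⁻¹)) Y) ((ρ p⁻¹) X) : ℂˣ) : ℂ))
      = (∑ b : K, ((BK b (c * c) : ℂˣ) : ℂ)) *
        (((BK q (p * p) : ℂˣ) : ℂ) * ((BH ((ρ (c * q⁻¹)) Y) ((ρ p⁻¹) X) : ℂˣ) : ℂ)) := by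
    intro c
    rw [Finset.sum_mul]
    exact Finset.sum_congr rfl fun b _ => by ring
  simp only [h4]
  rw [Finset.sum_eq_single (1 : K)]
  · simp [Finset.card_univ]
  · intro c _ hc
    rw [bk_sum hoddK BK hBK c hc, zero_mul]
  · intro h; exact absurd (Finset.mem_univ 1) h

/-- **Lemma 3.2.** Let `K, H` be finite abelian groups of odd order with symplectic structures
`BK, BH` (pairings `e^{⟨a,b⟩} = B(b)(a)`), with square-root maps `sqK, sqH`, and let
`ρ : K → Aut(H)` preserve the symplectic pairing of `H`.  Then for fixed `x, y ∈ H`, in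
`ℂ[K] ⊗ ℂ[K]`:
`Σ_{z,z',t,t'} e^{⟨z,t⟩} e^{⟨z',t'⟩} e^{⟨ρ(z⁻¹)x, ρ(t⁻¹)y^{1/2}⟩} zz' ⊗ tt'
  = |K| Σ_{u,v} e^{⟨u,v^{1/2}⟩} e^{⟨ρ(u^{-1/2})x, ρ(v^{-1/2})y^{1/2}⟩} u ⊗ v`. -/
theorem gauss_sum_identity
    (K H : Type*) [CommGroup K] [Fintype K] [CommGroup H] [Fintype H]
    (hoddK : Odd (Fintype.card K)) (hoddH : Odd (Fintype.card H))
    (BK : K ≃* (K →* ℂˣ)) (hBK : ∀ a b : K, BK a b = (BK b a)⁻¹)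
    (BH : H ≃* (H →* ℂˣ)) (hBH : ∀ a b : H, BH a b = (BH b a)⁻¹)
    (sqK : K → K) (hsqK : ∀ a : K, sqK a * sqK a = a)
    (sqH : H → H) (hsqH : ∀ a : H, sqH a * sqH a = a)
    (ρ : K →* MulAut H)
    (hρ : ∀ (k : K) (a b : H), BH ((ρ k) b) ((ρ k) a) = BH b a)
    (x y : H) :
    ∑ z : K, ∑ z' : K, ∑ t : K, ∑ t' : K,
        (((BK t z : ℂˣ) : ℂ) * ((BK t' z' : ℂˣ) : ℂ) *
            ((BH ((ρ t⁻¹) (sqH y)) ((ρ z⁻¹) x) : ℂˣ) : ℂ)) •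
          (MonoidAlgebra.of ℂ K (z * z') ⊗ₜ[ℂ] MonoidAlgebra.of ℂ K (t * t'))
      = (Fintype.card K : ℂ) •
          ∑ u : K, ∑ v : K,
            (((BK (sqK v) u : ℂˣ) : ℂ) *
                ((BH ((ρ (sqK v)⁻¹) (sqH y)) ((ρ (sqK u)⁻¹) x) : ℂˣ) : ℂ)) •
              (MonoidAlgebra.of ℂ K u ⊗ₜ[ℂ] MonoidAlgebra.of ℂ K v) := by
  -- reindex t' = t⁻¹ * v (innermost)
  have ht' : ∀ z z' t : K, (∑ t' : K,
      (((BK t z : ℂˣ) : ℂ) * ((BK t' z' : ℂˣ) : ℂ) *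
          ((BH ((ρ t⁻¹) (sqH y)) ((ρ z⁻¹) x) : ℂˣ) : ℂ)) •
        (MonoidAlgebra.of ℂ K (z * z') ⊗ₜ[ℂ] MonoidAlgebra.of ℂ K (t * t')))
      = ∑ v : K,
      (((BK t z : ℂˣ) : ℂ) * ((BK (t⁻¹ * v) z' : ℂˣ) : ℂ) *
          ((BH ((ρ t⁻¹) (sqH y)) ((ρ z⁻¹) x) : ℂˣ) : ℂ)) •
        (MonoidAlgebra.of ℂ K (z * z') ⊗ₜ[ℂ] MonoidAlgebra.of ℂ K v) := by
    intro z z' t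
    rw [← Equiv.sum_comp (Equiv.mulLeft t⁻¹)
      (fun t' : K => (((BK t z : ℂˣ) : ℂ) * ((BK t' z' : ℂˣ) : ℂ) *
          ((BH ((ρ t⁻¹) (sqH y)) ((ρ z⁻¹) x) : ℂˣ) : ℂ)) •
        (MonoidAlgebra.of ℂ K (z * z') ⊗ₜ[ℂ] MonoidAlgebra.of ℂ K (t * t')))]
    simp only [Equiv.coe_mulLeft, mul_inv_cancel_left]
  simp only [ht']
  -- reindex z' = z⁻¹ * u
  have hz' : ∀ z : K, (∑ z' : K, ∑ t : K, ∑ v : K,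
      (((BK t z : ℂˣ) : ℂ) * ((BK (t⁻¹ * v) z' : ℂˣ) : ℂ) *
          ((BH ((ρ t⁻¹) (sqH y)) ((ρ z⁻¹) x) : ℂˣ) : ℂ)) •
        (MonoidAlgebra.of ℂ K (z * z') ⊗ₜ[ℂ] MonoidAlgebra.of ℂ K v))
      = ∑ u : K, ∑ t : K, ∑ v : K,
      (((BK t z : ℂˣ) : ℂ) * ((BK (t⁻¹ * v) (z⁻¹ * u) : ℂˣ) : ℂ) *
          ((BH ((ρ t⁻¹) (sqH y)) ((ρ z⁻¹) x) : ℂˣ) : ℂ)) •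
        (MonoidAlgebra.of ℂ K u ⊗ₜ[ℂ] MonoidAlgebra.of ℂ K v) := by
    intro z
    rw [← Equiv.sum_comp (Equiv.mulLeft z⁻¹)
      (fun z' : K => ∑ t : K, ∑ v : K,
        (((BK t z : ℂˣ) : ℂ) * ((BK (t⁻¹ * v) z' : ℂˣ) : ℂ) *
            ((BH ((ρ t⁻¹) (sqH y)) ((ρ z⁻¹) x) : ℂˣ) : ℂ)) •
          (MonoidAlgebra.of ℂ K (z * z') ⊗ₜ[ℂ] MonoidAlgebra.of ℂ K v))]
    simp only [Equiv.coe_mulLeft, mul_inv_cancel_left]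
  simp only [hz']
  -- reorder sums: z to the inside
  rw [Finset.sum_comm]
  have hswap : ∀ u : K, (∑ z : K, ∑ t : K, ∑ v : K,
      (((BK t z : ℂˣ) : ℂ) * ((BK (t⁻¹ * v) (z⁻¹ * u) : ℂˣ) : ℂ) *
          ((BH ((ρ t⁻¹) (sqH y)) ((ρ z⁻¹) x) : ℂˣ) : ℂ)) •
        (MonoidAlgebra.of ℂ K u ⊗ₜ[ℂ] MonoidAlgebra.of ℂ K v))
      = ∑ v : K, ∑ z : K, ∑ t : K,
      (((BK t z : ℂˣ) : ℂ) * ((BK (t⁻¹ * v) (z⁻¹ * u) : ℂˣ) : ℂ) *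
          ((BH ((ρ t⁻¹) (sqH y)) ((ρ z⁻¹) x) : ℂˣ) : ℂ)) •
        (MonoidAlgebra.of ℂ K u ⊗ₜ[ℂ] MonoidAlgebra.of ℂ K v) :=
    fun u => Eq.trans (Finset.sum_congr rfl fun z _ => Finset.sum_comm) Finset.sum_comm
  simp only [hswap]
  simp only [← Finset.sum_smul]
  rw [Finset.smul_sum]
  refine Finset.sum_congr rfl fun u _ => ?_
  rw [Finset.smul_sum]
  refine Finset.sum_congr rfl fun v _ => ?_
  rw [smul_smul]
  rw [scalar_key hoddK BK hBK BH sqK hsqK ρ hρ x (sqH y) u v]
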